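/- Let X be a metrizable space with a regular Borel measure λ. Then for any measurable set C ⊆ X with λ(C) < ∞ and any ε > 0, there exists a Borel set A with λ(∂A) = 0 and λ(A Δ C) < ε. Moreover, if C is open then A can be chosen to be a closed subset of C. -/

import Mathlib

open MeasureTheory Set ENNReal

lemma aux_null_frontier_cthickening {X : Type*} [MetricSpace X] [MeasurableSpace X]
    [BorelSpace X] (μ : Measure X) [SFinite μ] (s : Set X) {a b : ℝ} (hab : a < b)
    (ha : 0 ≤ a) :
    ∃ r ∈ Set.Ioo a b, μ (frontier (Metric.cthickening r s)) = 0 := by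
  have mbles : ∀ r : NNReal, MeasurableSet (frontier (Metric.cthickening (r : ℝ) s)) :=
    fun r ↦ isClosed_frontier.measurableSet
  have disjs := Metric.frontier_cthickening_disjoint s
  have key := Measure.countable_meas_pos_of_disjoint_iUnion (μ := μ) mbles disjs
  -- the set of bad radii in (a,b) is countable, so pick a good one
  have hcnt : Set.Countable {r : ℝ | r ∈ Set.Ioo a b ∧
      0 < μ (frontier (Metric.cthickening r s))} := by
    have : {r : ℝ | r ∈ Set.Ioo a b ∧ 0 < μ (frontier (Metric.cthickening r s))} ⊆
        (fun q : NNReal => (q : ℝ)) '' {r : NNReal | 0 < μ (frontier (Metric.cthickening (r : ℝ) s))} := by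
      rintro r ⟨hr, hpos⟩
      exact ⟨⟨r, le_of_lt (lt_of_le_of_lt ha hr.1)⟩, hpos, rfl⟩
    exact (key.image _).mono this
  have aux := measure_diff_null (s := Set.Ioo a b) (hcnt.measure_zero volume)
  have len_pos : 0 < ENNReal.ofReal (b - a) := by simp only [hab, ENNReal.ofReal_pos, sub_pos]
  rw [← Real.volume_Ioo, ← aux] at len_pos
  rcases nonempty_of_measure_ne_zero len_pos.ne.symm with ⟨r, hr_in, hr⟩
  refine ⟨r, hr_in, ?_⟩
  by_contra h
  exact hr ⟨hr_in, pos_iff_ne_zero.mpr h⟩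

lemma aux_open_case {X : Type*} [MetricSpace X] [MeasurableSpace X] [BorelSpace X]
    (μ : Measure X) [μ.Regular] (C : Set X) (hCo : IsOpen C) (hCfin : μ C ≠ ⊤)
    (ε : ℝ≥0∞) (hε : 0 < ε) :
    ∃ A : Set X, IsClosed A ∧ A ⊆ C ∧ μ (frontier A) = 0 ∧ μ (C \ A) < ε := by
  obtain ⟨K, hKC, hKc, hKlt⟩ :=
    hCo.measurableSet.exists_isCompact_diff_lt hCfin hε.ne'
  obtain ⟨δ, hδpos, hδsub⟩ := hKc.exists_cthickening_subset_open hCo hKC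
  haveI : IsFiniteMeasure (μ.restrict C) :=
    ⟨by rwa [Measure.restrict_apply_univ, lt_top_iff_ne_top]⟩
  obtain ⟨r, hr, hrnull⟩ :=
    aux_null_frontier_cthickening (μ.restrict C) K (show (0:ℝ) < δ from hδpos) le_rfl
  set A := Metric.cthickening r K with hA
  have hAC : A ⊆ C := (Metric.cthickening_mono hr.2.le K).trans hδsub
  have hfr : frontier A ⊆ C := (frontier_subset_closure.trans
    (by rw [Metric.isClosed_cthickening.closure_eq])).trans hAC
  refine ⟨A, Metric.isClosed_cthickening, hAC, ?_, ?_⟩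
  · have := hrnull
    rwa [Measure.restrict_apply isClosed_frontier.measurableSet,
      Set.inter_eq_self_of_subset_left hfr] at this
  · exact lt_of_le_of_lt (measure_mono (Set.diff_subset_diff_right
      (Metric.self_subset_cthickening K))) hKlt

theorem stmt4 {X : Type*} [TopologicalSpace X] [TopologicalSpace.MetrizableSpace X]
    [MeasurableSpace X] [BorelSpace X] (μ : Measure X) [μ.Regular]
    (C : Set X) (hC : MeasurableSet C) (hCfin : μ C ≠ ⊤)
    (ε : ℝ≥0∞) (hε : 0 < ε) :
    (∃ A : Set X, MeasurableSet A ∧ μ (closure A ∩ closure Aᶜ) = 0 ∧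
      μ (symmDiff A C) < ε) ∧
    (IsOpen C → ∃ A : Set X, IsClosed A ∧ A ⊆ C ∧
      μ (closure A ∩ closure Aᶜ) = 0 ∧ μ (symmDiff A C) < ε) := by
  letI := TopologicalSpace.metrizableSpaceMetric X
  have hfr_eq : ∀ A : Set X, closure A ∩ closure Aᶜ = frontier A := by
    intro A; rw [frontier_eq_closure_inter_closure]
  rcases eq_or_ne ε ⊤ with rfl | hεtop
  · constructor
    · refine ⟨∅, MeasurableSet.empty, ?_, ?_⟩
      · simp
      · simpa [symmDiff_def] using hCfin.lt_top
    · intro _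
      refine ⟨∅, isClosed_empty, Set.empty_subset _, ?_, ?_⟩
      · simp
      · simpa [symmDiff_def] using hCfin.lt_top
  constructor
  · -- general case: approximate C by an open superset
    obtain ⟨U, hCU, hUo, hUfin, hUC⟩ := hC.exists_isOpen_diff_lt hCfin
      (show ε / 2 ≠ 0 from (ENNReal.half_pos hε.ne').ne')
    obtain ⟨A, hAcl, hAU, hAfr, hAlt⟩ := aux_open_case μ U hUo hUfin.ne (ε / 2)
      (ENNReal.half_pos hε.ne')
    refine ⟨A, hAcl.measurableSet, by rw [hfr_eq]; exact hAfr, ?_⟩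
    have h1 : μ (symmDiff A C) ≤ μ (U \ C) + μ (U \ A) := by
      rw [symmDiff_def]
      refine (measure_union_le _ _).trans (add_le_add ?_ ?_)
      · exact measure_mono (Set.diff_subset_diff_left hAU)
      · exact measure_mono (Set.diff_subset_diff_left hCU)
    calc μ (symmDiff A C) ≤ μ (U \ C) + μ (U \ A) := h1
      _ < ε / 2 + ε / 2 := ENNReal.add_lt_add hUC hAlt
      _ = ε := ENNReal.add_halves ε
  · intro hCo
    obtain ⟨A, hAcl, hAC, hAfr, hAlt⟩ := aux_open_case μ C hCo hCfin ε hε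
    refine ⟨A, hAcl, hAC, by rw [hfr_eq]; exact hAfr, ?_⟩
    rwa [symmDiff_of_le hAC]
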